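/- (Casimirs of the Lie–Poisson bracket on (𝔰𝔢(3) ⋉ ℝ⁴)*.) For differentiable functions F, G : ℝ³ × ℝ³ × ℝ³ × ℝ → ℝ, writing ∇₁F, ∇₂F, ∇₃F ∈ ℝ³ for the gradients of F in the three ℝ³-arguments and ∂₄F ∈ ℝ for the partial derivative in the last argument, define {F, G}(μ, p, Γ, h) = −μ·(∇₁F × ∇₁G) − p·(∇₁F × ∇₂G − ∇₁G × ∇₂F) − Γ·(∇₁F × ∇₃G + (∂₄G)∇₂F − ∇₁G × ∇₃F − (∂₄F)∇₂G), all derivatives evaluated at (μ, p, Γ, h). Then the functions C¹(μ,p,Γ,h) = ‖Γ‖² and C²(μ,p,Γ,h) = ‖p × Γ‖² are Casimirs: for every differentiable F and i ∈ {1,2}, {F, Cⁱ}(μ,p,Γ,h) = 0 for all (μ,p,Γ,h) ∈ ℝ³ × ℝ³ × ℝ³ × ℝ. -/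

import Mathlib

open Matrix

/-- The phase space `(𝔰𝔢(3) ⋉ ℝ⁴)* ≅ ℝ³ × ℝ³ × ℝ³ × ℝ` with coordinates `(μ, p, Γ, h)`. -/
abbrev Phase4 : Type := (Fin 3 → ℝ) × (Fin 3 → ℝ) × (Fin 3 → ℝ) × ℝ

/-- Gradient in the first `ℝ³`-argument (with respect to the dot product). -/
noncomputable def grad1 (F : Phase4 → ℝ) (x : Phase4) : Fin 3 → ℝ :=
  fun i => fderiv ℝ F x (Pi.single i 1, 0, 0, 0)

/-- Gradient in the second `ℝ³`-argument. -/
noncomputable def grad2 (F : Phase4 → ℝ) (x : Phase4) : Fin 3 → ℝ :=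
  fun i => fderiv ℝ F x (0, Pi.single i 1, 0, 0)

/-- Gradient in the third `ℝ³`-argument. -/
noncomputable def grad3 (F : Phase4 → ℝ) (x : Phase4) : Fin 3 → ℝ :=
  fun i => fderiv ℝ F x (0, 0, Pi.single i 1, 0)

/-- Partial derivative in the last (`ℝ`-valued) argument. -/
noncomputable def pder4 (F : Phase4 → ℝ) (x : Phase4) : ℝ :=
  fderiv ℝ F x (0, 0, 0, 1)

/-- The (minus) Lie–Poisson bracket on `(𝔰𝔢(3) ⋉ ℝ⁴)* ≅ ℝ³ × ℝ³ × ℝ³ × ℝ`: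
`{F,G}(μ,p,Γ,h) = −μ·(∇₁F × ∇₁G) − p·(∇₁F × ∇₂G − ∇₁G × ∇₂F)
  − Γ·(∇₁F × ∇₃G + (∂₄G)∇₂F − ∇₁G × ∇₃F − (∂₄F)∇₂G)`. -/
noncomputable def lpBracket4 (F G : Phase4 → ℝ) (x : Phase4) : ℝ :=
  -(x.1 ⬝ᵥ (grad1 F x ⨯₃ grad1 G x))
    - x.2.1 ⬝ᵥ (grad1 F x ⨯₃ grad2 G x - grad1 G x ⨯₃ grad2 F x)
    - x.2.2.1 ⬝ᵥ (grad1 F x ⨯₃ grad3 G x + pder4 G x • grad2 F x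
        - grad1 G x ⨯₃ grad3 F x - pder4 F x • grad2 G x)


section CasimirAux

private lemma quadDot (u y : Fin 3 → ℝ) :
    HasDerivAt (fun t : ℝ => (u + t • y) ⬝ᵥ (u + t • y)) (2 * (u ⬝ᵥ y)) 0 := by
  have h1 : HasDerivAt (fun t : ℝ => (2*(u ⬝ᵥ y))*t) (2*(u ⬝ᵥ y)) 0 := by
    simpa using (hasDerivAt_id (0:ℝ)).const_mul (2*(u ⬝ᵥ y))
  have h2 : HasDerivAt (fun t : ℝ => (y ⬝ᵥ y)*t^2) 0 0 := by
    simpa using (hasDerivAt_pow 2 (0:ℝ)).const_mul (y ⬝ᵥ y)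
  have h : HasDerivAt (fun t : ℝ => (u ⬝ᵥ u) + (2*(u ⬝ᵥ y))*t + (y ⬝ᵥ y)*t^2)
      (2*(u ⬝ᵥ y)) 0 := by
    have := ((h1.const_add (u ⬝ᵥ u)).add h2)
    rw [add_zero] at this
    exact this
  convert h using 1
  funext t
  simp [dotProduct, Fin.sum_univ_three]
  ring

private lemma lineDeriv' (F : Phase4 → ℝ) (x : Phase4) (hF : DifferentiableAt ℝ F x)
    (v : Phase4) {b : ℝ} (h : HasDerivAt (fun t : ℝ => F (x + t • v)) b 0) :
    fderiv ℝ F x v = b := by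
  have hl : HasDerivAt (fun t : ℝ => x + t • v) v 0 := by
    simpa using ((hasDerivAt_id (0:ℝ)).smul_const v).const_add x
  have h2 : HasDerivAt (fun t : ℝ => F (x + t • v)) (fderiv ℝ F x v) 0 := by
    have hf : HasFDerivAt F (fderiv ℝ F x) ((fun t : ℝ => x + t • v) 0) := by
      simpa using hF.hasFDerivAt
    have := hf.comp_hasDerivAt 0 hl
    exact this
  exact h2.unique h

private noncomputable def C1 : Phase4 → ℝ := fun y => y.2.2.1 ⬝ᵥ y.2.2.1

private noncomputable def C2 : Phase4 → ℝ :=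
  fun y => (y.2.1 ⨯₃ y.2.2.1) ⬝ᵥ (y.2.1 ⨯₃ y.2.2.1)

private lemma diffC1 : Differentiable ℝ C1 := by
  unfold C1
  simp only [dotProduct, Fin.sum_univ_three]
  fun_prop

private lemma diffC2 : Differentiable ℝ C2 := by
  unfold C2
  simp only [cross_apply, dotProduct, Fin.sum_univ_three, Matrix.cons_val_zero,
    Matrix.cons_val_one, Matrix.head_cons, Matrix.cons_val_two, Matrix.tail_cons]
  fun_prop

private lemma g1C1 (x : Phase4) : grad1 C1 x = 0 := by
  funext i
  refine lineDeriv' _ x (diffC1 x) _ ?_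
  have h := hasDerivAt_const (0:ℝ) (C1 x)
  convert h using 1
  all_goals try rfl
  all_goals funext t; simp [C1]

private lemma g2C1 (x : Phase4) : grad2 C1 x = 0 := by
  funext i
  refine lineDeriv' _ x (diffC1 x) _ ?_
  have h := hasDerivAt_const (0:ℝ) (C1 x)
  convert h using 1
  all_goals try rfl
  all_goals funext t; simp [C1]

private lemma p4C1 (x : Phase4) : pder4 C1 x = 0 := by
  refine lineDeriv' _ x (diffC1 x) _ ?_
  have h := hasDerivAt_const (0:ℝ) (C1 x)
  convert h using 1
  all_goals try rfl
  all_goals funext t; simp [C1]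

private lemma g3C1 (x : Phase4) :
    grad3 C1 x = fun i => 2 * (x.2.2.1 ⬝ᵥ Pi.single i 1) := by
  funext i
  refine lineDeriv' _ x (diffC1 x) _ ?_
  have h := quadDot x.2.2.1 (Pi.single i 1)
  convert h using 1
  all_goals try rfl
  all_goals funext t; simp [C1]

private lemma g1C2 (x : Phase4) : grad1 C2 x = 0 := by
  funext i
  refine lineDeriv' _ x (diffC2 x) _ ?_
  have h := hasDerivAt_const (0:ℝ) (C2 x)
  convert h using 1
  all_goals try rfl
  all_goals funext t; simp [C2]

private lemma p4C2 (x : Phase4) : pder4 C2 x = 0 := by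
  refine lineDeriv' _ x (diffC2 x) _ ?_
  have h := hasDerivAt_const (0:ℝ) (C2 x)
  convert h using 1
  all_goals try rfl
  all_goals funext t; simp [C2]

private lemma g2C2 (x : Phase4) :
    grad2 C2 x = fun i => 2 * ((x.2.1 ⨯₃ x.2.2.1) ⬝ᵥ ((Pi.single i 1 : Fin 3 → ℝ) ⨯₃ x.2.2.1)) := by
  funext i
  refine lineDeriv' _ x (diffC2 x) _ ?_
  have h := quadDot (x.2.1 ⨯₃ x.2.2.1) ((Pi.single i 1 : Fin 3 → ℝ) ⨯₃ x.2.2.1)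
  convert h using 1
  all_goals
    funext t
    have hc : (x.2.1 + t • (Pi.single i 1 : Fin 3 → ℝ)) ⨯₃ x.2.2.1
        = x.2.1 ⨯₃ x.2.2.1 + t • ((Pi.single i 1 : Fin 3 → ℝ) ⨯₃ x.2.2.1) := by
      simp [map_add, _root_.map_smul]
    simp [C2, hc]

private lemma g3C2 (x : Phase4) :
    grad3 C2 x = fun i => 2 * ((x.2.1 ⨯₃ x.2.2.1) ⬝ᵥ (x.2.1 ⨯₃ (Pi.single i 1 : Fin 3 → ℝ))) := by
  funext i
  refine lineDeriv' _ x (diffC2 x) _ ?_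
  have h := quadDot (x.2.1 ⨯₃ x.2.2.1) (x.2.1 ⨯₃ (Pi.single i 1 : Fin 3 → ℝ))
  convert h using 1
  all_goals
    funext t
    have hc : x.2.1 ⨯₃ (x.2.2.1 + t • (Pi.single i 1 : Fin 3 → ℝ))
        = x.2.1 ⨯₃ x.2.2.1 + t • (x.2.1 ⨯₃ (Pi.single i 1 : Fin 3 → ℝ)) := by
      simp [map_add, _root_.map_smul]
    simp [C2, hc]

end CasimirAux

/-- `C¹ = ‖Γ‖²` and `C² = ‖p × Γ‖²` are Casimirs of the Lie–Poisson bracket on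
`(𝔰𝔢(3) ⋉ ℝ⁴)*`. -/
theorem casimirs_se3_R4 (F : Phase4 → ℝ) (hF : Differentiable ℝ F) (x : Phase4) :
    lpBracket4 F (fun y => y.2.2.1 ⬝ᵥ y.2.2.1) x = 0 ∧
    lpBracket4 F (fun y => (y.2.1 ⨯₃ y.2.2.1) ⬝ᵥ (y.2.1 ⨯₃ y.2.2.1)) x = 0 := by
  constructor
  · show lpBracket4 F C1 x = 0
    simp only [lpBracket4, g1C1, g2C1, g3C1, p4C1]
    simp [cross_apply, dotProduct, Fin.sum_univ_three, Pi.single_apply]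
    ring
  · show lpBracket4 F C2 x = 0
    simp only [lpBracket4, g1C2, g2C2, g3C2, p4C2]
    simp [cross_apply, dotProduct, Fin.sum_univ_three, Pi.single_apply]
    ring
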